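/- arXiv:1705.05127 — 8 statements merged into one kernel-verified Lean document; each statement's English description precedes it below -/
import Mathlib

section
/- For the bi-periodic Fibonacci sequence and all n ≥ 1, a^(1-ε(n)) b^(ε(n)) q_{n+1} q_{n-1} − a^(ε(n)) b^(1-ε(n)) q_n² = a·(−1)^n, where ε(n) = n − 2⌊n/2⌋ is the parity of n. -/
/-- Bi-periodic Fibonacci sequence: q 0 = 0, q 1 = 1,
    q n = a * q (n-1) + q (n-2) if n even, q n = b * q (n-1) + q (n-2) if n odd. -/
def bpFib (a b : ℝ) : ℕ → ℝ
  | 0 => 0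
  | 1 => 1
  | n + 2 => (if Even (n + 2) then a else b) * bpFib a b (n + 1) + bpFib a b n

/-- Bi-periodic Lucas sequence: l 0 = 2, l 1 = a,
    l n = b * l (n-1) + l (n-2) if n even, l n = a * l (n-1) + l (n-2) if n odd. -/
def bpLucas (a b : ℝ) : ℕ → ℝ
  | 0 => 2
  | 1 => a
  | n + 2 => (if Even (n + 2) then b else a) * bpLucas a b (n + 1) + bpLucas a b n

theorem bpFib_cassini (a b : ℝ) (ha : a ≠ 0) (hb : b ≠ 0) (n : ℕ) (hn : 1 ≤ n) :
    a ^ (1 - n % 2) * b ^ (n % 2) * bpFib a b (n + 1) * bpFib a b (n - 1) -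
      a ^ (n % 2) * b ^ (1 - n % 2) * (bpFib a b n) ^ 2 = a * (-1 : ℝ) ^ n := by
  induction n, hn using Nat.le_induction with
  | base => simp [bpFib]
  | succ n hn ih =>
    obtain ⟨k, rfl⟩ : ∃ k, n = k + 1 := ⟨n - 1, by omega⟩
    rcases Nat.even_or_odd k with he | ho
    · -- k even, n = k+1 odd, n+1 = k+2 even
      have hk : k % 2 = 0 := Nat.even_iff.mp he
      have h1 : (k + 1) % 2 = 1 := by omega
      have h2 : (k + 2) % 2 = 0 := by omega
      have e3 : bpFib a b (k + 3) = b * bpFib a b (k + 2) + bpFib a b (k + 1) := by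
        rw [show k + 3 = (k + 1) + 2 by ring, bpFib, if_neg]
        simp [Nat.even_add_one, Nat.even_iff, hk]
      have e2 : bpFib a b (k + 2) = a * bpFib a b (k + 1) + bpFib a b k := by
        rw [bpFib, if_pos]
        simp [Nat.even_add_one, Nat.even_iff, hk]
      simp only [show k+1+1+1 = k+3 from rfl, show k+1+1 = k+2 from rfl, show k+2-1 = k+1 from rfl,
        h1, h2, Nat.add_sub_cancel] at ih ⊢
      rw [e3]
      rw [e2] at ih ⊢
      have hsgn : (-1 : ℝ) ^ (k + 2) = (-1) ^ (k + 1) * (-1) := by ring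
      rw [hsgn]
      linear_combination -ih
    · -- k odd, n = k+1 even, n+1 = k+2 odd
      have hk : k % 2 = 1 := Nat.odd_iff.mp ho
      have h1 : (k + 1) % 2 = 0 := by omega
      have h2 : (k + 2) % 2 = 1 := by omega
      have e3 : bpFib a b (k + 3) = a * bpFib a b (k + 2) + bpFib a b (k + 1) := by
        rw [show k + 3 = (k + 1) + 2 by ring, bpFib, if_pos]
        simp [Nat.even_add_one, Nat.even_iff, hk]
      have e2 : bpFib a b (k + 2) = b * bpFib a b (k + 1) + bpFib a b k := by
        rw [bpFib, if_neg]
        simp [Nat.even_add_one, Nat.even_iff, hk]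
      simp only [show k+1+1+1 = k+3 from rfl, show k+1+1 = k+2 from rfl, show k+2-1 = k+1 from rfl,
        h1, h2, Nat.add_sub_cancel] at ih ⊢
      rw [e3]
      rw [e2] at ih ⊢
      have hsgn : (-1 : ℝ) ^ (k + 2) = (-1) ^ (k + 1) * (-1) := by ring
      rw [hsgn]
      linear_combination -ih
end

section
/- For the bi-periodic Fibonacci and Lucas sequences and all n ≥ 1, (ab + 4)·q_n = l_{n+1} + l_{n−1}. -/
lemma bpLucas_sum_aux (a b : ℝ) : ∀ n : ℕ,
    (a * b + 4) * bpFib a b (n + 1) = bpLucas a b (n + 2) + bpLucas a b n := by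
  intro n
  induction n using Nat.twoStepInduction with
  | zero => simp [bpFib, bpLucas]; ring
  | one => simp [bpFib, bpLucas, Nat.even_add_one]; ring
  | more n ih1 ih2 =>
    have hf : bpFib a b (n + 3) =
        (if Even (n + 3) then a else b) * bpFib a b (n + 2) + bpFib a b (n + 1) := rfl
    have hl4 : bpLucas a b (n + 4) =
        (if Even (n + 4) then b else a) * bpLucas a b (n + 3) + bpLucas a b (n + 2) := rfl
    have hl2 : bpLucas a b (n + 2) =
        (if Even (n + 2) then b else a) * bpLucas a b (n + 1) + bpLucas a b n := rfl
    rcases Nat.even_or_odd n with h | h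
    · simp [Nat.even_add_one, h, parity_simps] at hf hl4 hl2 ⊢
      rw [hf, hl4]; nth_rewrite 2 [hl2]
      linear_combination b * ih2 + ih1
    · simp [Nat.even_add_one, h, parity_simps] at hf hl4 hl2 ⊢
      rw [hf, hl4]; nth_rewrite 2 [hl2]
      linear_combination a * ih2 + ih1

theorem bpLucas_sum (a b : ℝ) (ha : a ≠ 0) (hb : b ≠ 0) (n : ℕ) (hn : 1 ≤ n) :
    (a * b + 4) * bpFib a b n = bpLucas a b (n + 1) + bpLucas a b (n - 1) := by
  obtain ⟨m, rfl⟩ := Nat.exists_eq_add_of_le hn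
  simpa [Nat.add_comm, show 1 + (m + 1) = m + 2 from by omega] using bpLucas_sum_aux a b m
end

section
/- For the bi-periodic Lucas sequence and all n ≥ 1, (b/a)^(1−ε(n)) l_{n+1} l_{n−1} − (b/a)^(ε(n)) l_n² = (ab + 4)·(−1)^(n+1), where ε(n) is the parity of n. -/
theorem bpLucas_cassini (a b : ℝ) (ha : a ≠ 0) (hb : b ≠ 0) (n : ℕ) (hn : 1 ≤ n) :
    (b / a) ^ (1 - n % 2) * bpLucas a b (n + 1) * bpLucas a b (n - 1) -
      (b / a) ^ (n % 2) * (bpLucas a b n) ^ 2 = (a * b + 4) * (-1 : ℝ) ^ (n + 1) := by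
  induction n, hn using Nat.le_induction with
  | base =>
    simp only [bpLucas]
    norm_num
    field_simp
    simp only [bpLucas]; ring
  | succ n hn ih =>
    obtain ⟨k, rfl⟩ : ∃ k, n = k + 1 := ⟨n - 1, by omega⟩
    rcases Nat.even_or_odd k with hk | hk
    · have hk2 : k % 2 = 0 := Nat.even_iff.mp hk
      have h1 : (k + 1) % 2 = 1 := by omega
      have h2 : (k + 1 + 1) % 2 = 0 := by omega
      rw [h1] at ih
      rw [h2]
      have e2 : bpLucas a b (k + 2) = b * bpLucas a b (k + 1) + bpLucas a b k := by
        rw [bpLucas]; simp [Nat.even_add, hk]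
      have e3 : bpLucas a b (k + 3) = a * bpLucas a b (k + 2) + bpLucas a b (k + 1) := by
        rw [bpLucas]; simp [Nat.even_add, hk, Nat.even_iff, Nat.odd_iff] <;> omega
      have hpow1 : ((-1 : ℝ)) ^ (k + 1 + 1) = 1 := by
        have : Even (k + 2) := by rw [Nat.even_iff]; omega
        exact this.neg_one_pow
      have hpow2 : ((-1 : ℝ)) ^ (k + 1 + 1 + 1) = -1 := by
        have : Odd (k + 3) := by rw [Nat.odd_iff]; omega
        exact this.neg_one_pow
      rw [hpow1] at ih
      rw [hpow2]
      show (b/a)^(1-0) * bpLucas a b (k+1+1+1) * bpLucas a b (k+1+1-1) - (b/a)^0 * _ = _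
      simp only [pow_zero, pow_one, Nat.add_sub_cancel]
      rw [show k+1+1+1 = k+3 from rfl, show k+1+1 = k+2 from rfl] at *
      rw [e3, e2]
      rw [e2] at ih
      simp only [Nat.sub_self, Nat.sub_zero, Nat.add_sub_cancel, pow_zero, pow_one] at ih ⊢
      field_simp at ih ⊢
      linarith [ih]
    · have hk2 : k % 2 = 1 := Nat.odd_iff.mp hk
      have h1 : (k + 1) % 2 = 0 := by omega
      have h2 : (k + 1 + 1) % 2 = 1 := by omega
      rw [h1] at ih
      rw [h2]
      have e2 : bpLucas a b (k + 2) = a * bpLucas a b (k + 1) + bpLucas a b k := by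
        rw [bpLucas]; simp [Nat.even_add, Nat.even_iff, Nat.odd_iff] at * <;> omega
      have e3 : bpLucas a b (k + 3) = b * bpLucas a b (k + 2) + bpLucas a b (k + 1) := by
        rw [bpLucas]; simp [Nat.even_add, Nat.even_iff, Nat.odd_iff] at * <;> omega
      have hpow1 : ((-1 : ℝ)) ^ (k + 1 + 1) = -1 := by
        have : Odd (k + 2) := by rw [Nat.odd_iff]; omega
        exact this.neg_one_pow
      have hpow2 : ((-1 : ℝ)) ^ (k + 1 + 1 + 1) = 1 := by
        have : Even (k + 3) := by rw [Nat.even_iff]; omega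
        exact this.neg_one_pow
      rw [hpow1] at ih
      rw [hpow2]
      simp only [pow_zero, pow_one, Nat.add_sub_cancel] at ih ⊢
      rw [show k+1+1+1 = k+3 from rfl, show k+1+1 = k+2 from rfl] at *
      rw [e3, e2]
      rw [e2] at ih
      simp only [Nat.sub_self, Nat.sub_zero, Nat.add_sub_cancel, pow_zero, pow_one] at ih ⊢
      field_simp at ih ⊢
      linarith [ih]
end

section
/- Let Q_q = [[b, b/a], [1, 0]] with a, b nonzero reals. For even n ≥ 2, the inverse of Q_q^n equals (b/a)^(−n/2) · [[q_{n−1}, −(b/a) q_n], [−q_n, q_{n+1}]], where q_k is the bi-periodic Fibonacci sequence. -/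
lemma bpFib_rec_even (a b : ℝ) (m : ℕ) :
    bpFib a b (2*m+2) = a * bpFib a b (2*m+1) + bpFib a b (2*m) := by
  simp [bpFib, Nat.even_add]

lemma bpFib_rec_odd (a b : ℝ) (m : ℕ) :
    bpFib a b (2*m+3) = b * bpFib a b (2*m+2) + bpFib a b (2*m+1) := by
  have : (2*m+3) = (2*m+1) + 2 := by ring
  rw [this]
  have hne : ¬ Even (2*m+1+2) := by rintro ⟨k,hk⟩; omega
  simp [bpFib, hne]

lemma pow2 (a b : ℝ) (ha : a ≠ 0) (hb : b ≠ 0) (m : ℕ) :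
    (!![b, b / a; 1, 0] : Matrix (Fin 2) (Fin 2) ℝ) ^ (2*m+2) =
      (b/a)^(m+1) • !![bpFib a b (2*m+3), (b/a) * bpFib a b (2*m+2);
                       bpFib a b (2*m+2), bpFib a b (2*m+1)] := by
  induction m with
  | zero =>
    have h3 : bpFib a b 3 = b*a+1 := by have : ¬ Even 3 := by decide
                                        simp [bpFib, this]
    have h2 : bpFib a b 2 = a := by norm_num [bpFib]
    have h1 : bpFib a b 1 = 1 := by norm_num [bpFib]
    norm_num [h3, h2, h1, pow_two, Matrix.mul_fin_two]
    refine ⟨⟨?_, ?_⟩, ?_⟩ <;> field_simp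
    all_goals ring
  | succ k ih =>
    have : 2*(k+1)+2 = 2 + (2*k+2) := by ring
    rw [this, pow_add, ih, pow_two, Matrix.mul_smul]
    rw [Matrix.mul_fin_two, Matrix.mul_fin_two]
    have i1 : 2*(k+1)+3 = 2*k+5 := by ring
    have i2 : 2*(k+1)+2 = 2*k+4 := by ring
    have i3 : 2*(k+1)+1 = 2*k+3 := by ring
    simp only [show 2+(2*k+2)=2*k+4 from by ring, show 2*(k+1)+1=2*k+3 from by ring,
      show 2*(k+1)+3=2*k+5 from by ring, show 2*(k+1)+2=2*k+4 from by ring]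
    have hA : bpFib a b (2*k+4) = a * bpFib a b (2*k+3) + bpFib a b (2*k+2) := by
      have := bpFib_rec_even a b (k+1)
      have j1 : 2*(k+1)+2 = 2*k+4 := by ring
      have j2 : 2*(k+1)+1 = 2*k+3 := by ring
      have j3 : 2*(k+1) = 2*k+2 := by ring
      rwa [j1, j2, j3] at this
    have hB : bpFib a b (2*k+5) = b * bpFib a b (2*k+4) + bpFib a b (2*k+3) := by
      have := bpFib_rec_odd a b (k+1)
      have j1 : 2*(k+1)+3 = 2*k+5 := by ring
      have j2 : 2*(k+1)+2 = 2*k+4 := by ring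
      have j3 : 2*(k+1)+1 = 2*k+3 := by ring
      rwa [j1, j2, j3] at this
    have hC : bpFib a b (2*k+3) = b * bpFib a b (2*k+2) + bpFib a b (2*k+1) := bpFib_rec_odd a b k
    have hpow : ((b:ℝ)/a)^(k+1+1) = (b/a)^(k+1) * (b/a) := by ring
    rw [hpow, mul_smul]
    congr 1
    ext i j
    fin_cases i <;> fin_cases j <;>
      · simp [Matrix.smul_apply, hA, hB, hC]
        field_simp
        all_goals ring

lemma cassini (a b : ℝ) (ha : a ≠ 0) (hb : b ≠ 0) (m : ℕ) :
    bpFib a b (2*m+1) * bpFib a b (2*m+3) = (b/a) * (bpFib a b (2*m+2))^2 + 1 := by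
  induction m with
  | zero =>
    have h3 : bpFib a b 3 = b*a+1 := by have : ¬ Even 3 := by decide
                                        simp [bpFib, this]
    have h2 : bpFib a b 2 = a := by norm_num [bpFib]
    have h1 : bpFib a b 1 = 1 := by norm_num [bpFib]
    norm_num [h3, h2, h1]
    field_simp
  | succ k ih =>
    have hA : bpFib a b (2*k+4) = a * bpFib a b (2*k+3) + bpFib a b (2*k+2) := by
      have := bpFib_rec_even a b (k+1)
      simpa [show 2*(k+1)+2=2*k+4 from by ring, show 2*(k+1)+1=2*k+3 from by ring,
        show 2*(k+1)=2*k+2 from by ring] using this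
    have hB : bpFib a b (2*k+5) = b * bpFib a b (2*k+4) + bpFib a b (2*k+3) := by
      have := bpFib_rec_odd a b (k+1)
      simpa [show 2*(k+1)+3=2*k+5 from by ring, show 2*(k+1)+2=2*k+4 from by ring,
        show 2*(k+1)+1=2*k+3 from by ring] using this
    have hC : bpFib a b (2*k+3) = b * bpFib a b (2*k+2) + bpFib a b (2*k+1) := bpFib_rec_odd a b k
    simp only [show 2*(k+1)+1=2*k+3 from by ring, show 2*(k+1)+3=2*k+5 from by ring,
      show 2*(k+1)+2=2*k+4 from by ring]
    rw [hB, hA]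
    have ih' : a * (bpFib a b (2*k+1) * bpFib a b (2*k+3)) = b * bpFib a b (2*k+2)^2 + a := by
      field_simp at ih
      linarith
    field_simp
    linear_combination ih' + a * bpFib a b (2*k+3) * hC

theorem Qq_pow_inv (a b : ℝ) (ha : a ≠ 0) (hb : b ≠ 0) (n : ℕ) (hn : 2 ≤ n) (h : Even n) :
    ((!![b, b / a; 1, 0] : Matrix (Fin 2) (Fin 2) ℝ) ^ n)⁻¹ =
      (b / a) ^ (-((n / 2 : ℕ) : ℤ)) •
        !![bpFib a b (n - 1), -((b / a) * bpFib a b n);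
           -bpFib a b n, bpFib a b (n + 1)] := by
  obtain ⟨k, hk⟩ := h
  have hk' : n = 2 * (k - 1) + 2 := by omega
  set m := k - 1 with hm
  have hn2 : n / 2 = m + 1 := by omega
  have hn1 : n - 1 = 2*m+1 := by omega
  have hnn : n = 2*m+2 := by omega
  have hn3 : n + 1 = 2*m+3 := by omega
  rw [hn2, hn1, hn3]
  conv_lhs => rw [hnn]
  apply Matrix.inv_eq_right_inv
  rw [pow2 a b ha hb m, Matrix.smul_mul, Matrix.mul_smul, smul_smul, hnn]
  have hba : (b:ℝ)/a ≠ 0 := div_ne_zero hb ha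
  have hsc : ((b:ℝ)/a)^(m+1) * (b/a) ^ (-((m+1:ℕ) : ℤ)) = 1 := by
    rw [zpow_neg, zpow_natCast]
    field_simp
  rw [hsc, one_smul, Matrix.mul_fin_two, Matrix.one_fin_two]
  have hcs := cassini a b ha hb m
  ext i j
  fin_cases i <;> fin_cases j <;>
    simp [Matrix.one_apply]
  · linear_combination hcs
  · ring
  · ring
  · linear_combination hcs
end

section
/- Let Q_q = [[b, b/a], [1, 0]] with a, b nonzero reals. For even n, trace(Q_q^n ∘ Q_q^(−n)) = 2(1 + (b/a) q_n²), and for odd n, trace(Q_q^n ∘ Q_q^(−n)) = 2(1 − q_n²), where ∘ is the Hadamard product and q_n the n-th bi-periodic Fibonacci number. -/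
noncomputable def pSeq (a b : ℝ) : ℕ → ℝ
  | 0 => 1
  | 1 => b
  | n + 2 => b * pSeq a b (n + 1) + (b / a) * pSeq a b n

lemma powQ (a b : ℝ) : ∀ n : ℕ,
    (!![b, b / a; 1, 0] : Matrix (Fin 2) (Fin 2) ℝ) ^ (n + 1) =
    !![pSeq a b (n + 1), (b / a) * pSeq a b n;
       pSeq a b n, pSeq a b (n + 1) - b * pSeq a b n] := by
  have hp2 : ∀ k : ℕ, pSeq a b (k + 2) = b * pSeq a b (k + 1) + (b / a) * pSeq a b k := by
    intro k; rw [pSeq]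
  intro n
  induction n with
  | zero => simp [pSeq, pow_one]
  | succ m ih =>
    rw [pow_succ, ih]
    rw [hp2 m]
    ext i j
    fin_cases i <;> fin_cases j <;>
      simp [Matrix.mul_apply, Fin.sum_univ_two] <;> ring

lemma pq (a b : ℝ) (ha : a ≠ 0) : ∀ k : ℕ,
    pSeq a b (2 * k) = (b / a) ^ k * bpFib a b (2 * k + 1) ∧
    pSeq a b (2 * k + 1) = (b / a) ^ (k + 1) * bpFib a b (2 * k + 2) := by
  intro k
  induction k with
  | zero =>
    constructor
    · simp [pSeq, bpFib]
    · have h2 : bpFib a b 2 = a := by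
        show (if Even 2 then a else b) * bpFib a b 1 + bpFib a b 0 = a
        simp [bpFib]
      simp [pSeq, h2]
      field_simp
  | succ m ih =>
    obtain ⟨ih0, ih1⟩ := ih
    have hq1 : bpFib a b (2 * (m + 1) + 1) = b * bpFib a b (2 * m + 2) + bpFib a b (2 * m + 1) := by
      rw [show 2 * (m + 1) + 1 = (2 * m + 1) + 2 from by ring, bpFib]
      rw [if_neg (by simp [parity_simps] : ¬ Even (2 * m + 1 + 2))]
    have hq2 : bpFib a b (2 * (m + 1) + 2) = a * bpFib a b (2 * (m + 1) + 1) + bpFib a b (2 * m + 2) := by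
      rw [show 2 * (m + 1) + 2 = (2 * m + 2) + 2 from by ring, bpFib]
      rw [if_pos (by simp [parity_simps] : Even (2 * m + 2 + 2))]
      rw [show 2 * m + 2 + 1 = 2 * (m + 1) + 1 from by ring]
    have hp0 : pSeq a b (2 * (m + 1)) = b * pSeq a b (2 * m + 1) + (b / a) * pSeq a b (2 * m) := by
      have : 2 * (m + 1) = 2 * m + 2 := by ring
      rw [this, pSeq]
    have hp1 : pSeq a b (2 * (m + 1) + 1) = b * pSeq a b (2 * (m + 1)) + (b / a) * pSeq a b (2 * m + 1) := by
      have : 2 * (m + 1) + 1 = 2 * m + 1 + 2 := by ring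
      have h2 : 2 * (m + 1) = 2 * m + 2 := by ring
      rw [this, h2, pSeq]
    constructor
    · rw [hp0, ih0, ih1, hq1]
      ring
    · rw [hp1, hp0, ih0, ih1, hq2, hq1]
      have hcast : (2 : ℕ) * (m + 1) + 1 = 2 * m + 1 + 2 := by ring
      linear_combination (-((b / a) ^ (m + 1)) * (b * bpFib a b (2 * m + 2) + bpFib a b (2 * m + 1))) * (div_mul_cancel₀ b ha)

lemma aux_ev (w c q : ℝ) (hc : c ≠ 0) :
    2 * (1 + w * (c * q) ^ 2 / c ^ 2) = 2 * (1 + w * q ^ 2) := by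
  field_simp

lemma aux_od (w c q : ℝ) (hc : c ≠ 0) (hw : w ≠ 0) :
    2 * (1 + w * (c * q) ^ 2 / -(c ^ 2 * w)) = 2 * (1 - q ^ 2) := by
  rw [div_neg]
  field_simp
  ring

theorem hadamard_trace (a b : ℝ) (ha : a ≠ 0) (hb : b ≠ 0) (n : ℕ) :
    (Even n →
      (Matrix.hadamard ((!![b, b / a; 1, 0] : Matrix (Fin 2) (Fin 2) ℝ) ^ n)
          (((!![b, b / a; 1, 0] : Matrix (Fin 2) (Fin 2) ℝ) ^ n)⁻¹)).trace =
        2 * (1 + (b / a) * (bpFib a b n) ^ 2)) ∧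
    (Odd n →
      (Matrix.hadamard ((!![b, b / a; 1, 0] : Matrix (Fin 2) (Fin 2) ℝ) ^ n)
          (((!![b, b / a; 1, 0] : Matrix (Fin 2) (Fin 2) ℝ) ^ n)⁻¹)).trace =
        2 * (1 - (bpFib a b n) ^ 2)) := by
  have hba : b / a ≠ 0 := div_ne_zero hb ha
  set Q : Matrix (Fin 2) (Fin 2) ℝ := !![b, b / a; 1, 0] with hQ
  have hdetQ : Q.det = -(b / a) := by
    rw [hQ, Matrix.det_fin_two_of]; ring
  rcases n with _ | m
  · constructor
    · intro _
      simp [Matrix.hadamard, Matrix.trace_fin_two, Matrix.one_apply, bpFib]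
      norm_num
    · intro h; exact absurd h (by simp)
  · -- n = m + 1
    have hdet : (Q ^ (m + 1)).det = (-(b / a)) ^ (m + 1) := by
      rw [Matrix.det_pow, hdetQ]
    have hdetne : (Q ^ (m + 1)).det ≠ 0 := by
      rw [hdet]; exact pow_ne_zero _ (neg_ne_zero.mpr hba)
    have hpow := powQ a b m
    set p0 := pSeq a b m with hp0
    set p1 := pSeq a b (m + 1) with hp1
    have hinv : (Q ^ (m + 1))⁻¹ =
        ((Q ^ (m + 1)).det)⁻¹ • !![p1 - b * p0, -((b / a) * p0); -p0, p1] := by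
      rw [Matrix.inv_def, Ring.inverse_eq_inv', hpow, Matrix.adjugate_fin_two_of]
    have hdet2 : p1 * (p1 - b * p0) - (b / a) * p0 * p0 = (-(b / a)) ^ (m + 1) := by
      have := hdet
      rw [hpow, Matrix.det_fin_two_of] at this
      linarith [this]
    have htrace : (Matrix.hadamard (Q ^ (m + 1)) ((Q ^ (m + 1))⁻¹)).trace =
        2 * (1 + (b / a) * p0 ^ 2 / (-(b / a)) ^ (m + 1)) := by
      rw [Matrix.trace_fin_two, hinv, hdet]
      rw [hpow]
      simp only [Matrix.hadamard_apply, Matrix.smul_apply, Matrix.cons_val', Matrix.cons_val_zero,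
        Matrix.cons_val_one, Matrix.head_cons, Matrix.head_fin_const, Matrix.empty_val',
        Matrix.cons_val_fin_one, smul_eq_mul]
      have hpne : ((-(b / a)) ^ (m + 1)) ≠ 0 := pow_ne_zero _ (neg_ne_zero.mpr hba)
      have key : p1 * (p1 - b * p0) = (-(b / a)) ^ (m + 1) + (b / a) * p0 ^ 2 := by
        linear_combination hdet2
      calc p1 * (((-(b / a)) ^ (m + 1))⁻¹ * (p1 - b * p0)) +
            (p1 - b * p0) * (((-(b / a)) ^ (m + 1))⁻¹ * p1)
          = 2 * (p1 * (p1 - b * p0)) * ((-(b / a)) ^ (m + 1))⁻¹ := by ring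
        _ = 2 * ((-(b / a)) ^ (m + 1) + (b / a) * p0 ^ 2) * ((-(b / a)) ^ (m + 1))⁻¹ := by rw [key]
        _ = 2 * (1 + (b / a) * p0 ^ 2 / (-(b / a)) ^ (m + 1)) := by
              have gen : ∀ d x : ℝ, d ≠ 0 → 2 * (d + x) * d⁻¹ = 2 * (1 + x / d) := by
                intro d x hd; field_simp
              exact gen _ _ hpne
    constructor
    · intro hev
      obtain ⟨k, hk⟩ : ∃ k, m = 2 * k + 1 := by
        rcases Nat.even_or_odd m with h | h
        · exfalso; rw [Nat.even_add_one] at hev; exact hev h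
        · obtain ⟨k, hk⟩ := h; exact ⟨k, hk⟩
      have hpq := (pq a b ha k).2
      rw [htrace]
      have : p0 = (b / a) ^ (k + 1) * bpFib a b (m + 1) := by
        rw [hp0, hk]; convert hpq using 3 <;> omega
      rw [this]
      have hm : m + 1 = 2 * (k + 1) := by omega
      rw [hm]
      have e1 : (-(b / a)) ^ (2 * (k + 1)) = ((b / a) ^ (k + 1)) ^ 2 := by
        rw [pow_mul, neg_sq, ← pow_mul, show 2 * (k + 1) = (k + 1) * 2 from by ring, pow_mul]
      rw [e1]
      have hc : ((b / a) ^ (k + 1)) ≠ 0 := pow_ne_zero _ hba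
      exact aux_ev (b / a) _ _ hc
    · intro hodd
      obtain ⟨k, hk⟩ : ∃ k, m = 2 * k := by
        have hm : Even m := by
          rcases Nat.even_or_odd m with h | h
          · exact h
          · exfalso
            have : Even (m + 1) := Odd.add_one h
            exact (Nat.not_even_iff_odd.mpr hodd) this
        obtain ⟨k, hk⟩ := hm; exact ⟨k, by omega⟩
      have hpq := (pq a b ha k).1
      rw [htrace]
      have : p0 = (b / a) ^ k * bpFib a b (m + 1) := by
        rw [hp0, hk]; convert hpq using 3 <;> omega
      rw [this]
      have hm : m + 1 = 2 * k + 1 := by omega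
      rw [hm]
      have e2 : (-(b / a)) ^ (2 * k + 1) = -(((b / a) ^ k) ^ 2 * (b / a)) := by
        rw [Odd.neg_pow ⟨k, by ring⟩, show 2 * k + 1 = k * 2 + 1 from by ring, pow_succ, pow_mul]
      rw [e2]
      have hc : ((b / a) ^ k) ≠ 0 := pow_ne_zero _ hba
      exact aux_od (b / a) _ _ hc hba
end

section
/- Let Q_q = [[b, b/a], [1, 0]] with a, b nonzero reals. For even n, the eigenvalues of the Hadamard product Q_q^n ∘ Q_q^(−n) are 1 and 1 + 2(b/a) q_n²; equivalently, its characteristic polynomial is (λ − 1)(λ − (1 + 2(b/a) q_n²)). -/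
open Polynomial

lemma charpoly_fin_two' (p q r s : ℝ) :
    (!![p, q; r, s] : Matrix (Fin 2) (Fin 2) ℝ).charpoly
      = (X - C p) * (X - C s) - C q * C r := by
  rw [Matrix.charpoly, Matrix.det_fin_two, Matrix.charmatrix_apply_eq,
    Matrix.charmatrix_apply_eq, Matrix.charmatrix_apply_ne _ _ _ (by decide),
    Matrix.charmatrix_apply_ne _ _ _ (by decide)]
  simp

lemma aux (p q r s : ℝ) (hd : p * s - q * r ≠ 0) :
    (Matrix.hadamard (!![p, q; r, s] : Matrix (Fin 2) (Fin 2) ℝ) (!![p, q; r, s])⁻¹).charpoly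
      = (X - C 1) * (X - C (1 + 2 * q * r / (p * s - q * r))) := by
  have hinv : (!![p, q; r, s] : Matrix (Fin 2) (Fin 2) ℝ)⁻¹
      = !![s / (p * s - q * r), -q / (p * s - q * r);
           -r / (p * s - q * r), p / (p * s - q * r)] := by
    rw [Matrix.inv_def, Matrix.adjugate_fin_two, Matrix.det_fin_two_of,
      Ring.inverse_eq_inv']
    ext i j
    fin_cases i <;> fin_cases j <;> simp [div_eq_inv_mul]
  have hH : Matrix.hadamard (!![p, q; r, s] : Matrix (Fin 2) (Fin 2) ℝ) (!![p, q; r, s])⁻¹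
      = !![p * (s / (p * s - q * r)), q * (-q / (p * s - q * r));
           r * (-r / (p * s - q * r)), s * (p / (p * s - q * r))] := by
    rw [hinv]
    ext i j
    fin_cases i <;> fin_cases j <;> simp
  rw [hH, charpoly_fin_two']
  have h1 : p * (s / (p * s - q * r)) + s * (p / (p * s - q * r))
      = 1 + (1 + 2 * q * r / (p * s - q * r)) := by
    field_simp
    ring
  have h2 : p * (s / (p * s - q * r)) * (s * (p / (p * s - q * r)))
      - q * (-q / (p * s - q * r)) * (r * (-r / (p * s - q * r)))
      = 1 * (1 + 2 * q * r / (p * s - q * r)) := by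
    field_simp
    ring
  have hC1 : (C (p * (s / (p * s - q * r))) + C (s * (p / (p * s - q * r))) : ℝ[X])
      = C 1 + C (1 + 2 * q * r / (p * s - q * r)) := by
    rw [← C_add, ← C_add, h1]
  have hC2 : (C (p * (s / (p * s - q * r))) * C (s * (p / (p * s - q * r)))
      - C (q * (-q / (p * s - q * r))) * C (r * (-r / (p * s - q * r))) : ℝ[X])
      = C 1 * C (1 + 2 * q * r / (p * s - q * r)) := by
    rw [← C_mul, ← C_mul, ← C_mul, ← C_sub, h2]
  linear_combination hC2 - (X : ℝ[X]) * hC1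

lemma bpFib_even (a b : ℝ) (m : ℕ) :
    bpFib a b (2 * m + 2) = a * bpFib a b (2 * m + 1) + bpFib a b (2 * m) := by
  rw [show 2 * m + 2 = (2 * m) + 2 from rfl, bpFib]
  simp [Nat.even_add]

lemma bpFib_odd (a b : ℝ) (m : ℕ) :
    bpFib a b (2 * m + 3) = b * bpFib a b (2 * m + 2) + bpFib a b (2 * m + 1) := by
  rw [show 2 * m + 3 = (2 * m + 1) + 2 from rfl, bpFib]
  simp [Nat.even_add]

lemma pow_formula (a b : ℝ) (ha : a ≠ 0) : ∀ m : ℕ,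
    (!![b, b / a; 1, 0] : Matrix (Fin 2) (Fin 2) ℝ) ^ (2 * m + 2) =
      !![(b / a) ^ (m + 1) * bpFib a b (2 * m + 3),
         (b / a) ^ (m + 1) * ((b / a) * bpFib a b (2 * m + 2));
         (b / a) ^ (m + 1) * bpFib a b (2 * m + 2),
         (b / a) ^ (m + 1) * bpFib a b (2 * m + 1)] := by
  intro m
  induction m with
  | zero =>
      rw [show 2 * 0 + 2 = 2 from rfl, pow_two, Matrix.mul_fin_two]
      have h1 : bpFib a b 1 = 1 := rfl
      have h2 : bpFib a b 2 = a := by rw [show (2:ℕ) = 0 + 2 from rfl, bpFib]; simp [bpFib]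
      have h3 : bpFib a b 3 = a * b + 1 := by
        rw [show (3:ℕ) = 1 + 2 from rfl, bpFib, if_neg (by decide), h2]
        simp [bpFib]
        ring
      rw [h1, h2, h3]
      ext i j
      fin_cases i <;> fin_cases j <;> simp <;> field_simp <;> ring
  | succ k ih =>
      have hQ2 : (!![b, b / a; 1, 0] : Matrix (Fin 2) (Fin 2) ℝ) ^ 2 =
          !![b * b + b / a * 1, b * (b / a) + b / a * 0;
             1 * b + 0 * 1, 1 * (b / a) + 0 * 0] := by
        rw [pow_two, Matrix.mul_fin_two]
      rw [show 2 * (k + 1) + 2 = (2 * k + 2) + 2 by ring, pow_add, ih, hQ2,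
        Matrix.mul_fin_two]
      have e2 : bpFib a b (2 * k + 2 + 2) = a * bpFib a b (2 * k + 3) + bpFib a b (2 * k + 2) := by
        rw [show 2 * k + 2 + 2 = 2 * (k + 1) + 2 by ring, bpFib_even a b (k + 1),
          show 2 * (k + 1) + 1 = 2 * k + 3 by ring, show 2 * (k + 1) = 2 * k + 2 by ring]
      have e3 : bpFib a b (2 * (k + 1) + 3) =
          b * (a * bpFib a b (2 * k + 3) + bpFib a b (2 * k + 2)) + bpFib a b (2 * k + 3) := by
        rw [bpFib_odd a b (k + 1), show 2 * (k + 1) + 2 = 2 * k + 2 + 2 by ring, e2,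
          show 2 * (k + 1) + 1 = 2 * k + 3 by ring]
      rw [e3, e2, show 2 * (k + 1) + 1 = 2 * k + 3 by ring, bpFib_odd a b k]
      ext i j
      fin_cases i <;> fin_cases j <;> simp <;> field_simp <;> ring_nf <;> simp [ha] <;> ring_nf <;> simp [pow_two, ← mul_assoc, ha]


set_option linter.unnecessarySeqFocus false in
open Polynomial in
theorem hadamard_charpoly_even (a b : ℝ) (ha : a ≠ 0) (hb : b ≠ 0) (n : ℕ) (h : Even n) :
    (Matrix.hadamard ((!![b, b / a; 1, 0] : Matrix (Fin 2) (Fin 2) ℝ) ^ n)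
        (((!![b, b / a; 1, 0] : Matrix (Fin 2) (Fin 2) ℝ) ^ n)⁻¹)).charpoly =
      (X - C 1) * (X - C (1 + 2 * (b / a) * (bpFib a b n) ^ 2)) := by
  have hba : b / a ≠ 0 := div_ne_zero hb ha
  obtain ⟨m, hm⟩ := h
  cases m with
  | zero =>
      subst hm
      rw [pow_zero, show (1 : Matrix (Fin 2) (Fin 2) ℝ) = !![1, 0; 0, 1] from
        Matrix.one_fin_two, aux 1 0 0 1 (by norm_num)]
      norm_num [bpFib]
  | succ k =>
      have hn : k + 1 + (k + 1) = 2 * k + 2 := by ring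
      subst hm
      rw [hn, pow_formula a b ha k]
      have hdet : (b / a) ^ (k + 1) * bpFib a b (2 * k + 3) *
            ((b / a) ^ (k + 1) * bpFib a b (2 * k + 1)) -
          (b / a) ^ (k + 1) * ((b / a) * bpFib a b (2 * k + 2)) *
            ((b / a) ^ (k + 1) * bpFib a b (2 * k + 2)) = (b / a) ^ (2 * k + 2) := by
        have h1 : ((!![b, b / a; 1, 0] : Matrix (Fin 2) (Fin 2) ℝ) ^ (2 * k + 2)).det
            = (-(b / a)) ^ (2 * k + 2) := by
          rw [Matrix.det_pow, Matrix.det_fin_two_of]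
          norm_num
        rw [pow_formula a b ha k, Matrix.det_fin_two_of] at h1
        rw [h1, Even.neg_pow ⟨k + 1, by ring⟩]
      rw [aux _ _ _ _ (by rw [hdet]; exact pow_ne_zero _ hba), hdet]
      have : 2 * ((b / a) ^ (k + 1) * ((b / a) * bpFib a b (2 * k + 2))) *
            ((b / a) ^ (k + 1) * bpFib a b (2 * k + 2)) / (b / a) ^ (2 * k + 2)
          = 2 * (b / a) * bpFib a b (2 * k + 2) ^ 2 := by
        rw [div_eq_iff (pow_ne_zero _ hba)]
        ring
      rw [this]
end

section
/- Let Q_l = [[a² + 2a/b, a²/b], [a, 2a/b]] with a, b nonzero reals and ab + 4 ≠ 0. Then for all n ≥ 1, Q_l^n = (a/b)^n (ab+4)^(n/2) [[q_{n+1}, q_n], [(b/a) q_n, q_{n−1}]] if n is even, and Q_l^n = (a/b)^n (ab+4)^((n−1)/2) [[l_{n+1}, l_n], [(b/a) l_n, l_{n−1}]] if n is odd, where q_k and l_k are the bi-periodic Fibonacci and Lucas sequences. -/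
lemma bpFib_step (a b : ℝ) (n : ℕ) :
    bpFib a b (n + 2) = (if Even n then a else b) * bpFib a b (n + 1) + bpFib a b n := by
  rw [bpFib]
  congr 2
  simp [Nat.even_add]

lemma bpLucas_step (a b : ℝ) (n : ℕ) :
    bpLucas a b (n + 2) = (if Even n then b else a) * bpLucas a b (n + 1) + bpLucas a b n := by
  rw [bpLucas]
  congr 2
  simp [Nat.even_add]

lemma lucas_eq (a b : ℝ) : ∀ n, bpLucas a b (n+1) = bpFib a b (n+2) + bpFib a b n := by
  intro n
  induction n using Nat.twoStepInduction with
  | zero => norm_num [bpFib, bpLucas]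
  | one =>
    show bpLucas a b 2 = bpFib a b 3 + bpFib a b 1
    norm_num [bpFib, bpLucas, Nat.even_iff]; ring
  | more n ih1 ih2 =>
    show bpLucas a b (n+3) = bpFib a b (n+4) + bpFib a b (n+2)
    have ih2' : bpLucas a b (n+2) = bpFib a b (n+3) + bpFib a b (n+1) := ih2
    rcases Nat.even_or_odd n with h | h
    · have h' := Nat.even_iff.1 h
      have e1 : ¬ Even (n+1) := by simp only [Nat.even_iff]; omega
      have e2 : Even (n+2) := by simp only [Nat.even_iff]; omega
      have h3 : bpLucas a b (n+3) = a * bpLucas a b (n+2) + bpLucas a b (n+1) := by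
        rw [show n+3 = n+1+2 from rfl, bpLucas_step, if_neg e1]
      have f4 : bpFib a b (n+4) = a * bpFib a b (n+3) + bpFib a b (n+2) := by
        rw [show n+4 = n+2+2 from rfl, bpFib_step, if_pos e2]
      have f3 : bpFib a b (n+3) = b * bpFib a b (n+2) + bpFib a b (n+1) := by
        rw [show n+3 = n+1+2 from rfl, bpFib_step, if_neg e1]
      have f2 : bpFib a b (n+2) = a * bpFib a b (n+1) + bpFib a b n := by
        rw [bpFib_step, if_pos h]
      rw [h3, ih1, ih2', f4, f3, f2]; ring
    · have h' := Nat.odd_iff.1 h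
      have e1 : Even (n+1) := by simp only [Nat.even_iff]; omega
      have e2 : ¬ Even (n+2) := by simp only [Nat.even_iff]; omega
      have h3 : bpLucas a b (n+3) = b * bpLucas a b (n+2) + bpLucas a b (n+1) := by
        rw [show n+3 = n+1+2 from rfl, bpLucas_step, if_pos e1]
      have f4 : bpFib a b (n+4) = b * bpFib a b (n+3) + bpFib a b (n+2) := by
        rw [show n+4 = n+2+2 from rfl, bpFib_step, if_neg e2]
      have f3 : bpFib a b (n+3) = a * bpFib a b (n+2) + bpFib a b (n+1) := by
        rw [show n+3 = n+1+2 from rfl, bpFib_step, if_pos e1]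
      have f2 : bpFib a b (n+2) = b * bpFib a b (n+1) + bpFib a b n := by
        rw [bpFib_step, if_neg (Nat.not_even_iff_odd.2 h)]
      rw [h3, ih1, ih2', f4, f3, f2]; ring

lemma fib_eq (a b : ℝ) : ∀ n, (a*b+4) * bpFib a b (n+1) = bpLucas a b (n+2) + bpLucas a b n := by
  intro n
  induction n using Nat.twoStepInduction with
  | zero => norm_num [bpFib, bpLucas]; ring
  | one =>
    show (a*b+4) * bpFib a b 2 = bpLucas a b 3 + bpLucas a b 1
    norm_num [bpFib, bpLucas, Nat.even_iff]; ring
  | more n ih1 ih2 =>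
    show (a*b+4) * bpFib a b (n+3) = bpLucas a b (n+4) + bpLucas a b (n+2)
    have ih2' : (a*b+4) * bpFib a b (n+2) = bpLucas a b (n+3) + bpLucas a b (n+1) := ih2
    rcases Nat.even_or_odd n with h | h
    · have h' := Nat.even_iff.1 h
      have e1 : ¬ Even (n+1) := by simp only [Nat.even_iff]; omega
      have e2 : Even (n+2) := by simp only [Nat.even_iff]; omega
      have h3 : bpFib a b (n+3) = b * bpFib a b (n+2) + bpFib a b (n+1) := by
        rw [show n+3 = n+1+2 from rfl, bpFib_step, if_neg e1]
      have f4 : bpLucas a b (n+4) = b * bpLucas a b (n+3) + bpLucas a b (n+2) := by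
        rw [show n+4 = n+2+2 from rfl, bpLucas_step, if_pos e2]
      have f3 : bpLucas a b (n+3) = a * bpLucas a b (n+2) + bpLucas a b (n+1) := by
        rw [show n+3 = n+1+2 from rfl, bpLucas_step, if_neg e1]
      have f2 : bpLucas a b (n+2) = b * bpLucas a b (n+1) + bpLucas a b n := by
        rw [bpLucas_step, if_pos h]
      rw [h3, mul_add, mul_comm ((a*b+4)) (b * bpFib a b (n+2)), mul_assoc, mul_comm (bpFib a b (n+2)) (a*b+4),
        ih2', ih1, f4, f3, f2]; ring
    · have h' := Nat.odd_iff.1 h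
      have e1 : Even (n+1) := by simp only [Nat.even_iff]; omega
      have e2 : ¬ Even (n+2) := by simp only [Nat.even_iff]; omega
      have h3 : bpFib a b (n+3) = a * bpFib a b (n+2) + bpFib a b (n+1) := by
        rw [show n+3 = n+1+2 from rfl, bpFib_step, if_pos e1]
      have f4 : bpLucas a b (n+4) = a * bpLucas a b (n+3) + bpLucas a b (n+2) := by
        rw [show n+4 = n+2+2 from rfl, bpLucas_step, if_neg e2]
      have f3 : bpLucas a b (n+3) = b * bpLucas a b (n+2) + bpLucas a b (n+1) := by
        rw [show n+3 = n+1+2 from rfl, bpLucas_step, if_pos e1]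
      have f2 : bpLucas a b (n+2) = a * bpLucas a b (n+1) + bpLucas a b n := by
        rw [bpLucas_step, if_neg (Nat.not_even_iff_odd.2 h)]
      rw [h3, mul_add, mul_comm ((a*b+4)) (a * bpFib a b (n+2)), mul_assoc, mul_comm (bpFib a b (n+2)) (a*b+4),
        ih2', ih1, f4, f3, f2]; ring

set_option maxHeartbeats 1000000 in
theorem Ql_pow (a b : ℝ) (ha : a ≠ 0) (hb : b ≠ 0) (hab : a * b + 4 ≠ 0)
    (n : ℕ) (hn : 1 ≤ n) :
    (Even n →
      (!![a ^ 2 + 2 * a / b, a ^ 2 / b; a, 2 * a / b] : Matrix (Fin 2) (Fin 2) ℝ) ^ n =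
        ((a / b) ^ n * (a * b + 4) ^ (n / 2)) •
          !![bpFib a b (n + 1), bpFib a b n;
             (b / a) * bpFib a b n, bpFib a b (n - 1)]) ∧
    (Odd n →
      (!![a ^ 2 + 2 * a / b, a ^ 2 / b; a, 2 * a / b] : Matrix (Fin 2) (Fin 2) ℝ) ^ n =
        ((a / b) ^ n * (a * b + 4) ^ ((n - 1) / 2)) •
          !![bpLucas a b (n + 1), bpLucas a b n;
             (b / a) * bpLucas a b n, bpLucas a b (n - 1)]) := by
  induction n, hn using Nat.le_induction with
  | base =>
    constructor
    · intro h; exact absurd h (by decide)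
    · intro _
      rw [pow_one]
      ext i j
      fin_cases i <;> fin_cases j <;>
        simp [bpLucas, Nat.even_iff] <;> field_simp <;> ring
  | succ m hm ih =>
    obtain ⟨k, rfl⟩ : ∃ k, m = k + 1 := ⟨m - 1, by omega⟩
    rcases Nat.even_or_odd (k+1) with he | ho
    · -- k+1 even, so k odd; k+2 is odd
      have hk := Nat.even_iff.1 he
      refine ⟨fun h => absurd (Nat.even_iff.1 h) (by omega), fun _ => ?_⟩
      have key := ih.1 he
      have hl3 : bpLucas a b (k+3) = bpFib a b (k+4) + bpFib a b (k+2) := lucas_eq a b (k+2)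
      have hl2 : bpLucas a b (k+2) = bpFib a b (k+3) + bpFib a b (k+1) := lucas_eq a b (k+1)
      have hl1 : bpLucas a b (k+1) = bpFib a b (k+2) + bpFib a b k := lucas_eq a b k
      have f4 : bpFib a b (k+4) = b * bpFib a b (k+3) + bpFib a b (k+2) := by
        rw [show k+4 = k+2+2 from rfl, bpFib_step, if_neg (by simp only [Nat.even_iff]; omega)]
      have f3 : bpFib a b (k+3) = a * bpFib a b (k+2) + bpFib a b (k+1) := by
        rw [show k+3 = k+1+2 from rfl, bpFib_step, if_pos he]
      have f2 : bpFib a b (k+2) = b * bpFib a b (k+1) + bpFib a b k := by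
        rw [bpFib_step, if_neg (by simp only [Nat.even_iff]; omega)]
      rw [show k+1-1 = k from rfl, show k+1+1 = k+2 from rfl] at key
      rw [pow_succ, key, show k+1+1-1 = k+1 from rfl, show k+1+1+1 = k+3 from rfl,
        show k+1+1 = k+2 from rfl, hl3, hl2, hl1, f4, f3, f2]
      ext i j
      fin_cases i <;> fin_cases j <;>
        simp [Matrix.mul_apply, Fin.sum_univ_two, pow_succ] <;>
        field_simp <;> ring
    · -- k+1 odd, so k even; k+2 even
      have hk := Nat.odd_iff.1 ho
      refine ⟨fun _ => ?_, fun h => absurd (Nat.odd_iff.1 h) (by omega)⟩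
      have key := ih.2 ho
      have hf3 : bpFib a b (k+3) = (bpLucas a b (k+4) + bpLucas a b (k+2)) / (a*b+4) := by
        rw [eq_div_iff hab, mul_comm]; exact fib_eq a b (k+2)
      have hf2 : bpFib a b (k+2) = (bpLucas a b (k+3) + bpLucas a b (k+1)) / (a*b+4) := by
        rw [eq_div_iff hab, mul_comm]; exact fib_eq a b (k+1)
      have hf1 : bpFib a b (k+1) = (bpLucas a b (k+2) + bpLucas a b k) / (a*b+4) := by
        rw [eq_div_iff hab, mul_comm]; exact fib_eq a b k
      have f4 : bpLucas a b (k+4) = b * bpLucas a b (k+3) + bpLucas a b (k+2) := by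
        rw [show k+4 = k+2+2 from rfl, bpLucas_step, if_pos (by simp only [Nat.even_iff]; omega)]
      have f3 : bpLucas a b (k+3) = a * bpLucas a b (k+2) + bpLucas a b (k+1) := by
        rw [show k+3 = k+1+2 from rfl, bpLucas_step, if_neg (by simp only [Nat.even_iff]; omega)]
      have f2 : bpLucas a b (k+2) = b * bpLucas a b (k+1) + bpLucas a b k := by
        rw [bpLucas_step, if_pos (by simp only [Nat.even_iff]; omega)]
      rw [show k+1-1 = k from rfl, show k+1+1 = k+2 from rfl] at key
      have hexp : (k+1+1)/2 = k/2 + 1 := by omega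
      rw [pow_succ, key, show k+1+1-1 = k+1 from rfl, show k+1+1+1 = k+3 from rfl,
        show k+1+1 = k+2 from rfl, hexp, hf3, hf2, hf1, f4, f3, f2]
      ext i j
      fin_cases i <;> fin_cases j <;>
        simp [Matrix.mul_apply, Fin.sum_univ_two, pow_succ] <;>
        field_simp <;> ring
end

section
/- Let Q_l = [[a² + 2a/b, a²/b], [a, 2a/b]] with a, b nonzero reals and ab + 4 ≠ 0, and let ∘ denote the Hadamard product. For even n, det(Q_l^n ∘ Q_l^(−n)) = 1 + 2(b/a) q_n², and for odd n, det(Q_l^n ∘ Q_l^(−n)) = 1 + 2b/(a(ab+4)) · l_n², where q_n, l_n are the bi-periodic Fibonacci and Lucas numbers. -/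
section aux

variable (a b : ℝ)

private noncomputable def Qm : Matrix (Fin 2) (Fin 2) ℝ :=
  !![a ^ 2 + 2 * a / b, a ^ 2 / b; a, 2 * a / b]

private noncomputable def Mo (x y : ℝ) : Matrix (Fin 2) (Fin 2) ℝ :=
  !![a / b * (b * y + 2 * x), a / b * (2 * y - a * x);
     2 * y - a * x, a / b * ((a * b + 2) * x - b * y)]

private noncomputable def Me (x y : ℝ) : Matrix (Fin 2) (Fin 2) ℝ :=
  !![b * y + x, y; b / a * y, x]

private lemma stepOE (ha : a ≠ 0) (hb : b ≠ 0) (x y : ℝ) :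
    Mo a b x y * Qm a b = (a ^ 2 * (a * b + 4) / b ^ 2) • Me a b x y := by
  ext i j
  fin_cases i <;> fin_cases j <;>
    · simp [Mo, Me, Qm, Matrix.mul_apply, Fin.sum_univ_two, Matrix.smul_apply, smul_eq_mul]
      field_simp
      ring

private lemma stepEO (ha : a ≠ 0) (hb : b ≠ 0) (x y : ℝ) :
    Me a b x y * Qm a b = Mo a b (b * y + x) (a * (b * y + x) + y) := by
  ext i j
  fin_cases i <;> fin_cases j <;>
    · simp [Mo, Me, Qm, Matrix.mul_apply, Fin.sum_univ_two]
      field_simp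
      ring

private lemma fib_odd (m : ℕ) :
    bpFib a b (2 * m + 3) = b * bpFib a b (2 * m + 2) + bpFib a b (2 * m + 1) := by
  show bpFib a b (2 * m + 1 + 2) = _
  rw [bpFib]
  have h : ¬ Even (2 * m + 1 + 2) := by simp [Nat.even_add_one, Nat.even_add]
  simp [h]

private lemma fib_even (m : ℕ) :
    bpFib a b (2 * m + 2) = a * bpFib a b (2 * m + 1) + bpFib a b (2 * m) := by
  rw [bpFib]
  have h : Even (2 * m + 2) := by simp [Nat.even_add]
  simp [h]

private lemma lucas_odd (m : ℕ) :
    bpLucas a b (2 * m + 3) = a * bpLucas a b (2 * m + 2) + bpLucas a b (2 * m + 1) := by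
  show bpLucas a b (2 * m + 1 + 2) = _
  rw [bpLucas]
  have h : ¬ Even (2 * m + 1 + 2) := by simp [Nat.even_add_one, Nat.even_add]
  simp [h]

private lemma lucas_even (m : ℕ) :
    bpLucas a b (2 * m + 2) = b * bpLucas a b (2 * m + 1) + bpLucas a b (2 * m) := by
  rw [bpLucas]
  have h : Even (2 * m + 2) := by simp [Nat.even_add]
  simp [h]

private lemma fib_two : bpFib a b 2 = a := by
  rw [bpFib]
  norm_num [show bpFib a b 1 = 1 from rfl, show bpFib a b 0 = 0 from rfl]

private lemma bridge : ∀ m : ℕ,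
    bpLucas a b (2 * m + 1) = 2 * bpFib a b (2 * m + 2) - a * bpFib a b (2 * m + 1) ∧
    bpLucas a b (2 * m + 2) = b * bpFib a b (2 * m + 2) + 2 * bpFib a b (2 * m + 1) := by
  intro m
  induction m with
  | zero =>
    have h2 : bpFib a b (2 * 0 + 2) = a := fib_two a b
    have h1 : bpFib a b (2 * 0 + 1) = 1 := rfl
    have h3 : bpLucas a b (2 * 0 + 1) = a := rfl
    have h4 : bpLucas a b (2 * 0 + 2) = b * a + 2 := by
      rw [show (2 * 0 + 2 : ℕ) = 0 + 2 from rfl, bpLucas]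
      norm_num [show bpLucas a b 1 = a from rfl, show bpLucas a b 0 = 2 from rfl]
    rw [h1, h2, h3, h4]
    constructor <;> ring
  | succ m ih =>
    obtain ⟨ih1, ih2⟩ := ih
    have hq3 : bpFib a b (2 * m + 3) = b * bpFib a b (2 * m + 2) + bpFib a b (2 * m + 1) :=
      fib_odd a b m
    have hq4 : bpFib a b (2 * m + 4) = a * bpFib a b (2 * m + 3) + bpFib a b (2 * m + 2) :=
      fib_even a b (m + 1)
    have hl3 : bpLucas a b (2 * m + 3) = a * bpLucas a b (2 * m + 2) + bpLucas a b (2 * m + 1) :=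
      lucas_odd a b m
    have hl4 : bpLucas a b (2 * m + 4) = b * bpLucas a b (2 * m + 3) + bpLucas a b (2 * m + 2) :=
      lucas_even a b (m + 1)
    constructor
    · show bpLucas a b (2 * m + 3) = 2 * bpFib a b (2 * m + 4) - a * bpFib a b (2 * m + 3)
      rw [hl3, ih1, ih2, hq4, hq3]; ring
    · show bpLucas a b (2 * m + 4) = b * bpFib a b (2 * m + 4) + 2 * bpFib a b (2 * m + 3)
      rw [hl4, hl3, ih1, ih2, hq4, hq3]; ring

private lemma key (ha : a ≠ 0) (hb : b ≠ 0) : ∀ m : ℕ,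
    Qm a b ^ (2 * m + 1) =
      ((a ^ 2 * (a * b + 4) / b ^ 2) ^ m) •
        Mo a b (bpFib a b (2 * m + 1)) (bpFib a b (2 * m + 2)) ∧
    Qm a b ^ (2 * m + 2) =
      ((a ^ 2 * (a * b + 4) / b ^ 2) ^ (m + 1)) •
        Me a b (bpFib a b (2 * m + 1)) (bpFib a b (2 * m + 2)) := by
  intro m
  induction m with
  | zero =>
    have h2 : bpFib a b (2 * 0 + 2) = a := fib_two a b
    have h1 : bpFib a b (2 * 0 + 1) = 1 := rfl
    have hQ1 : Qm a b ^ (2 * 0 + 1) = Mo a b (bpFib a b (2 * 0 + 1)) (bpFib a b (2 * 0 + 2)) := by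
      rw [h1, h2, show (2 * 0 + 1 : ℕ) = 1 from rfl, pow_one]
      ext i j
      fin_cases i <;> fin_cases j <;>
        · show _ = _
          simp only [Mo, Qm, Matrix.cons_val', Matrix.cons_val_zero, Matrix.cons_val_one,
            Matrix.head_cons, Matrix.empty_val', Matrix.cons_val_fin_one, Matrix.head_fin_const]
          field_simp
          ring
    refine ⟨by simpa using hQ1, ?_⟩
    have h3 : Qm a b ^ (2 * 0 + 2) = Qm a b ^ (2 * 0 + 1) * Qm a b := by
      rw [show (2 * 0 + 2 : ℕ) = (2 * 0 + 1) + 1 from rfl, pow_succ]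
    rw [h3, hQ1, stepOE a b ha hb]
    norm_num
  | succ m ih =>
    obtain ⟨_, ihE⟩ := ih
    have hx' : bpFib a b (2 * (m + 1) + 1)
        = b * bpFib a b (2 * m + 2) + bpFib a b (2 * m + 1) := fib_odd a b m
    have hy' : bpFib a b (2 * (m + 1) + 2)
        = a * (b * bpFib a b (2 * m + 2) + bpFib a b (2 * m + 1)) + bpFib a b (2 * m + 2) := by
      rw [fib_even a b (m + 1), hx']
      norm_num [show (2 * (m + 1) : ℕ) = 2 * m + 2 from by ring]
    have hO : Qm a b ^ (2 * (m + 1) + 1) =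
        ((a ^ 2 * (a * b + 4) / b ^ 2) ^ (m + 1)) •
          Mo a b (bpFib a b (2 * (m + 1) + 1)) (bpFib a b (2 * (m + 1) + 2)) := by
      have h : Qm a b ^ (2 * (m + 1) + 1) = Qm a b ^ (2 * m + 2) * Qm a b := by
        rw [show (2 * (m + 1) + 1 : ℕ) = (2 * m + 2) + 1 from by ring, pow_succ]
      rw [h, ihE, Matrix.smul_mul, stepEO a b ha hb, hx', hy']
    refine ⟨hO, ?_⟩
    have h : Qm a b ^ (2 * (m + 1) + 2) = Qm a b ^ (2 * (m + 1) + 1) * Qm a b := by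
      rw [show (2 * (m + 1) + 2 : ℕ) = (2 * (m + 1) + 1) + 1 from rfl, pow_succ]
    rw [h, hO, Matrix.smul_mul, stepOE a b ha hb, smul_smul, ← pow_succ]

private lemma detQ (hb : b ≠ 0) : (Qm a b).det = a ^ 2 * (a * b + 4) / b ^ 2 := by
  simp [Qm, Matrix.det_fin_two_of]
  field_simp
  ring

private lemma had_det (M : Matrix (Fin 2) (Fin 2) ℝ) (c : ℝ) (hc : c ≠ 0) (hd : M.det ≠ 0) :
    (Matrix.hadamard (c • M) (c • M)⁻¹).det = 1 + 2 * (M 0 1 * M 1 0) / M.det := by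
  have hdet : (c • M).det = c ^ 2 * M.det := by
    rw [Matrix.det_smul]; norm_num
  have hinv : (c • M)⁻¹ = (c ^ 2 * M.det)⁻¹ • (c • M.adjugate) := by
    rw [Matrix.inv_def, hdet, Matrix.adjugate_smul]; norm_num
  have h2 : Matrix.hadamard (c • M) ((c ^ 2 * M.det)⁻¹ • (c • M.adjugate))
      = (M.det)⁻¹ • Matrix.hadamard M M.adjugate := by
    ext i j
    simp only [Matrix.hadamard_apply, Matrix.smul_apply, smul_eq_mul]
    field_simp
  rw [hinv, h2, Matrix.det_smul]
  simp only [Fintype.card_fin, smul_eq_mul]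
  rw [Matrix.det_fin_two (Matrix.hadamard M M.adjugate)]
  simp only [Matrix.hadamard_apply, Matrix.adjugate_fin_two, Matrix.cons_val', Matrix.cons_val_zero,
    Matrix.cons_val_one, Matrix.head_cons, Matrix.empty_val', Matrix.cons_val_fin_one,
    Matrix.head_fin_const, Matrix.of_apply]
  have hd' : M 0 0 * M 1 1 - M 0 1 * M 1 0 ≠ 0 := by
    rwa [Matrix.det_fin_two] at hd
  rw [Matrix.det_fin_two M]
  field_simp
  ring

private lemma hadamard_one :
    Matrix.hadamard (1 : Matrix (Fin 2) (Fin 2) ℝ) (1 : Matrix (Fin 2) (Fin 2) ℝ) = 1 := by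
  ext i j
  by_cases h : i = j <;> simp [Matrix.hadamard_apply, Matrix.one_apply, h]

end aux

theorem Ql_hadamard_det (a b : ℝ) (ha : a ≠ 0) (hb : b ≠ 0) (hab : a * b + 4 ≠ 0) (n : ℕ) :
    (Even n →
      (Matrix.hadamard
          ((!![a ^ 2 + 2 * a / b, a ^ 2 / b; a, 2 * a / b] : Matrix (Fin 2) (Fin 2) ℝ) ^ n)
          (((!![a ^ 2 + 2 * a / b, a ^ 2 / b; a, 2 * a / b] : Matrix (Fin 2) (Fin 2) ℝ) ^ n)⁻¹)).det =
        1 + 2 * (b / a) * (bpFib a b n) ^ 2) ∧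
    (Odd n →
      (Matrix.hadamard
          ((!![a ^ 2 + 2 * a / b, a ^ 2 / b; a, 2 * a / b] : Matrix (Fin 2) (Fin 2) ℝ) ^ n)
          (((!![a ^ 2 + 2 * a / b, a ^ 2 / b; a, 2 * a / b] : Matrix (Fin 2) (Fin 2) ℝ) ^ n)⁻¹)).det =
        1 + 2 * b / (a * (a * b + 4)) * (bpLucas a b n) ^ 2) := by
  have hQeq : (!![a ^ 2 + 2 * a / b, a ^ 2 / b; a, 2 * a / b] : Matrix (Fin 2) (Fin 2) ℝ)
      = Qm a b := rfl
  have hD0 : (a ^ 2 * (a * b + 4) / b ^ 2) ≠ 0 :=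
    div_ne_zero (mul_ne_zero (pow_ne_zero 2 ha) hab) (pow_ne_zero 2 hb)
  constructor
  · intro hEven
    obtain ⟨k, hk⟩ := hEven
    cases k with
    | zero =>
      subst hk
      simp only [show (0 + 0 : ℕ) = 0 from rfl, pow_zero, inv_one, hadamard_one,
        Matrix.det_one, show bpFib a b 0 = 0 from rfl]
      norm_num
    | succ j =>
      have hn : n = 2 * j + 2 := by omega
      subst hn
      obtain ⟨_, hE⟩ := key a b ha hb j
      have hpow : (Qm a b ^ (2 * j + 2)).det = (a ^ 2 * (a * b + 4) / b ^ 2) ^ (2 * j + 2) := by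
        rw [Matrix.det_pow, detQ a b hb]
      rw [hE, Matrix.det_smul] at hpow
      simp only [Fintype.card_fin] at hpow
      have hsq : (((a ^ 2 * (a * b + 4) / b ^ 2)) ^ (j + 1)) ^ 2
          = (a ^ 2 * (a * b + 4) / b ^ 2) ^ (2 * j + 2) := by
        rw [← pow_mul, show (j + 1) * 2 = 2 * j + 2 from by ring]
      rw [hsq] at hpow
      have hMe1 : (Me a b (bpFib a b (2 * j + 1)) (bpFib a b (2 * j + 2))).det = 1 :=
        mul_left_cancel₀ (pow_ne_zero _ hD0) (hpow.trans (mul_one _).symm)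
      rw [hQeq, hE, had_det _ _ (pow_ne_zero _ hD0) (by rw [hMe1]; norm_num), hMe1]
      rw [show (Me a b (bpFib a b (2 * j + 1)) (bpFib a b (2 * j + 2))) 0 1
            = bpFib a b (2 * j + 2) from rfl,
          show (Me a b (bpFib a b (2 * j + 1)) (bpFib a b (2 * j + 2))) 1 0
            = b / a * bpFib a b (2 * j + 2) from rfl]
      ring
  · intro hOdd
    obtain ⟨m, hm⟩ := hOdd
    subst hm
    obtain ⟨hO, _⟩ := key a b ha hb m
    have hpow : (Qm a b ^ (2 * m + 1)).det = (a ^ 2 * (a * b + 4) / b ^ 2) ^ (2 * m + 1) := by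
      rw [Matrix.det_pow, detQ a b hb]
    rw [hO, Matrix.det_smul] at hpow
    simp only [Fintype.card_fin] at hpow
    have hsq : (((a ^ 2 * (a * b + 4) / b ^ 2)) ^ m) ^ 2 * (a ^ 2 * (a * b + 4) / b ^ 2)
        = (a ^ 2 * (a * b + 4) / b ^ 2) ^ (2 * m + 1) := by
      rw [← pow_mul, ← pow_succ, show m * 2 + 1 = 2 * m + 1 from by ring]
    have hMoD : (Mo a b (bpFib a b (2 * m + 1)) (bpFib a b (2 * m + 2))).det
        = (a ^ 2 * (a * b + 4) / b ^ 2) := by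
      refine mul_left_cancel₀ (pow_ne_zero (m * 2) hD0) ?_
      have h1 : ((a ^ 2 * (a * b + 4) / b ^ 2) ^ m) ^ 2
          = (a ^ 2 * (a * b + 4) / b ^ 2) ^ (m * 2) := by rw [← pow_mul]
      rw [← h1, hpow, ← hsq]
    rw [hQeq, hO, had_det _ _ (pow_ne_zero _ hD0) (by rw [hMoD]; exact hD0), hMoD]
    obtain ⟨hL, _⟩ := bridge a b m
    rw [hL,
      show (Mo a b (bpFib a b (2 * m + 1)) (bpFib a b (2 * m + 2))) 0 1
        = a / b * (2 * bpFib a b (2 * m + 2) - a * bpFib a b (2 * m + 1)) from rfl,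
      show (Mo a b (bpFib a b (2 * m + 1)) (bpFib a b (2 * m + 2))) 1 0
        = 2 * bpFib a b (2 * m + 2) - a * bpFib a b (2 * m + 1) from rfl]
    field_simp
end
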